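/- Let m, n ≥ 1 and let C be a positive semidefinite complex matrix indexed by Fin m × Fin n satisfying the channel normalization: for all g, g' ∈ Fin n, ∑_{f ∈ Fin m} C ((f,g),(f,g')) equals 1 if g = g' and 0 otherwise. Then there exists a density matrix ρ₀ on Fin m such that (ρ₀ ⊗ I_n) − max(1/n², 1/m²)·C is positive semidefinite. (Every quantum channel with n-dimensional input and m-dimensional output can be simulated from the future to the past with probability at least max(1/n², 1/m²).) -/

import Mathlib

open Matrix
open scoped Kronecker ComplexOrder

namespace ChannelSimAux

variable {α β : Type*} [Fintype α] [Fintype β] [DecidableEq α] [DecidableEq β]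

lemma dot_sum_right {ι γ : Type*} [Fintype ι] (M : Matrix ι ι ℂ) (a : ι → ℂ)
    (s : Finset γ) (f : γ → ι → ℂ) :
    star a ⬝ᵥ M *ᵥ (∑ g ∈ s, f g) = ∑ g ∈ s, star a ⬝ᵥ M *ᵥ f g := by
  classical
  induction s using Finset.induction_on with
  | empty => simp
  | insert _ _ h ih =>
      rw [Finset.sum_insert h, Finset.sum_insert h, mulVec_add, dotProduct_add, ih]

lemma dot_sum_left {ι γ : Type*} [Fintype ι] (M : Matrix ι ι ℂ) (c : ι → ℂ)
    (s : Finset γ) (f : γ → ι → ℂ) :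
    star (∑ g ∈ s, f g) ⬝ᵥ M *ᵥ c = ∑ g ∈ s, star (f g) ⬝ᵥ M *ᵥ c := by
  classical
  induction s using Finset.induction_on with
  | empty => simp
  | insert _ _ h ih =>
      rw [Finset.sum_insert h, Finset.sum_insert h, star_add, add_dotProduct, ih]

/-- Quadratic form of a sum expands into a double sum. -/
lemma quad_sum {ι γ : Type*} [Fintype ι] (M : Matrix ι ι ℂ) (s : Finset γ) (f : γ → ι → ℂ) :
    star (∑ g ∈ s, f g) ⬝ᵥ M *ᵥ (∑ g ∈ s, f g)
      = ∑ g ∈ s, ∑ g' ∈ s, star (f g) ⬝ᵥ M *ᵥ (f g') := by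
  rw [dot_sum_left]
  exact Finset.sum_congr rfl fun g _ => dot_sum_right M (f g) s f

lemma pair_bound {ι : Type*} [Fintype ι] (M : Matrix ι ι ℂ) (hM : M.PosSemidef)
    (a c : ι → ℂ) :
    star a ⬝ᵥ M *ᵥ c + star c ⬝ᵥ M *ᵥ a ≤ star a ⬝ᵥ M *ᵥ a + star c ⬝ᵥ M *ᵥ c := by
  rw [← sub_nonneg]
  have h := hM.dotProduct_mulVec_nonneg (a - c)
  have hexp : star (a - c) ⬝ᵥ M *ᵥ (a - c)
      = star a ⬝ᵥ M *ᵥ a - star a ⬝ᵥ M *ᵥ c - star c ⬝ᵥ M *ᵥ a + star c ⬝ᵥ M *ᵥ c := by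
    simp only [star_sub, sub_dotProduct, dotProduct_sub, mulVec_sub]
    ring
  rw [hexp] at h
  convert h using 1
  ring

/-- Partial trace over the second factor. -/
noncomputable def pt (C : Matrix (α × β) (α × β) ℂ) : Matrix α α ℂ :=
  Matrix.of fun f f' => ∑ h : β, C (f, h) (f', h)

lemma pt_isHermitian (C : Matrix (α × β) (α × β) ℂ) (hC : C.IsHermitian) :
    (pt C).IsHermitian := by
  apply IsHermitian.ext
  intro f f'
  simp only [pt, of_apply, star_sum]
  exact Finset.sum_congr rfl fun h _ => hC.apply (f, h) (f', h)

/-- the vector supported on `{p | p.2 = h}` whose `α`-part is `w`. -/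
def emb (w : α → ℂ) (h : β) : α × β → ℂ := fun p => if p.2 = h then w p.1 else 0

lemma star_ite_zero (b : Prop) [Decidable b] (c : ℂ) :
    star (if b then c else 0) = if b then star c else 0 := by
  split <;> simp

lemma mulVec_emb (C : Matrix (α × β) (α × β) ℂ) (w : α → ℂ) (h : β) (p : α × β) :
    (C *ᵥ emb w h) p = ∑ f' : α, C p (f', h) * w f' := by
  simp only [mulVec, dotProduct, emb, Fintype.sum_prod_type, mul_ite, mul_zero]
  refine Finset.sum_congr rfl fun f' _ => ?_
  rw [Finset.sum_ite_eq' Finset.univ h (fun k' => C p (f', k') * w f')]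
  simp

lemma quad_emb (C : Matrix (α × β) (α × β) ℂ) (w : α → ℂ) (h : β) :
    star (emb w h) ⬝ᵥ C *ᵥ (emb w h)
      = ∑ f : α, ∑ f' : α, star (w f) * (C (f, h) (f', h) * w f') := by
  simp only [dotProduct, Pi.star_apply, mulVec_emb]
  simp only [emb, Fintype.sum_prod_type, star_ite_zero, ite_mul, zero_mul]
  refine Finset.sum_congr rfl fun f _ => ?_
  rw [Finset.sum_ite_eq' Finset.univ h]
  simp only [Finset.mem_univ, if_true]
  rw [Finset.mul_sum]

lemma quad_pt (C : Matrix (α × β) (α × β) ℂ) (w : α → ℂ) :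
    star w ⬝ᵥ (pt C) *ᵥ w = ∑ h : β, star (emb w h) ⬝ᵥ C *ᵥ (emb w h) := by
  simp only [quad_emb]
  simp only [dotProduct, mulVec, pt, of_apply, Pi.star_apply]
  have hf : ∀ f : α, star (w f) * (∑ f' : α, (∑ h : β, C (f, h) (f', h)) * w f')
      = ∑ h : β, ∑ f' : α, star (w f) * (C (f, h) (f', h) * w f') := by
    intro f
    simp only [Finset.sum_mul, Finset.mul_sum]
    exact Finset.sum_comm
  rw [Finset.sum_congr rfl fun f _ => hf f]
  rw [Finset.sum_comm]

lemma pt_posSemidef (C : Matrix (α × β) (α × β) ℂ) (hC : C.PosSemidef) :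
    (pt C).PosSemidef := by
  refine PosSemidef.of_dotProduct_mulVec_nonneg (pt_isHermitian C hC.1) fun w => ?_
  rw [quad_pt]
  exact Finset.sum_nonneg fun h _ => hC.dotProduct_mulVec_nonneg _

lemma quad_pt_kron (C : Matrix (α × β) (α × β) ℂ) (v : α × β → ℂ) :
    star v ⬝ᵥ ((pt C) ⊗ₖ (1 : Matrix β β ℂ)) *ᵥ v
      = ∑ g : β, ∑ h : β, star (emb (fun f => v (f, g)) h) ⬝ᵥ C *ᵥ (emb (fun f => v (f, g)) h) := by
  simp only [quad_emb]
  simp only [dotProduct, mulVec, kroneckerMap_apply, one_apply, pt, of_apply, Pi.star_apply,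
    Fintype.sum_prod_type, mul_ite, mul_one, mul_zero, ite_mul, zero_mul]
  rw [Finset.sum_comm]
  refine Finset.sum_congr rfl fun g _ => ?_
  have lhs_eq : ∀ f : α, star (v (f, g)) * (∑ f' : α, ∑ g' : β,
        if g = g' then (∑ h : β, C (f, h) (f', h)) * v (f', g') else 0)
      = ∑ h : β, ∑ f' : α, star (v (f, g)) * (C (f, h) (f', h) * v (f', g)) := by
    intro f
    have hcol : ∀ f' : α, (∑ g' : β, if g = g' then (∑ h : β, C (f, h) (f', h)) * v (f', g') else 0)
        = ∑ h : β, C (f, h) (f', h) * v (f', g) := by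
      intro f'
      rw [Finset.sum_ite_eq Finset.univ g]
      simp [Finset.sum_mul]
    rw [Finset.sum_congr rfl fun f' _ => hcol f']
    simp only [Finset.mul_sum]
    exact Finset.sum_comm
  rw [Finset.sum_congr rfl fun f _ => lhs_eq f]
  exact Finset.sum_comm

/-- Key operator inequality: `C ≤ |β| • (pt C ⊗ 1)` for a PSD matrix on a product space. -/
lemma key (C : Matrix (α × β) (α × β) ℂ) (hC : C.PosSemidef) :
    (((Fintype.card β : ℕ) : ℂ) • ((pt C) ⊗ₖ (1 : Matrix β β ℂ)) - C).PosSemidef := by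
  have hK : ((pt C) ⊗ₖ (1 : Matrix β β ℂ)).IsHermitian := by
    apply IsHermitian.ext
    rintro ⟨f, g⟩ ⟨f', g'⟩
    show star (pt C f' f * (1 : Matrix β β ℂ) g' g) = pt C f f' * (1 : Matrix β β ℂ) g g'
    have h1 : star ((1 : Matrix β β ℂ) g' g) = (1 : Matrix β β ℂ) g g' := by
      by_cases hgg : g = g'
      · simp [one_apply, hgg]
      · simp [one_apply, hgg, Ne.symm hgg]
    rw [star_mul', (pt_isHermitian C hC.1).apply f f', h1]
  refine PosSemidef.of_dotProduct_mulVec_nonneg ?_ ?_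
  · apply IsHermitian.ext
    intro i j
    simp only [Matrix.sub_apply, Matrix.smul_apply, smul_eq_mul, star_sub, star_mul',
      star_natCast]
    rw [hK.apply i j, hC.1.apply i j]
  · intro v
    rw [sub_mulVec, dotProduct_sub, smul_mulVec, dotProduct_smul, smul_eq_mul,
      sub_nonneg]
    set b : β → (α × β → ℂ) := fun g => emb (fun f => v (f, g)) g with hb
    have hv : v = ∑ g : β, b g := by
      funext p
      simp only [b, emb, Finset.sum_apply]
      rw [Finset.sum_ite_eq Finset.univ p.2 (fun g => v (p.1, g))]
      simp
    have hQv : star v ⬝ᵥ C *ᵥ v = ∑ g : β, ∑ g' : β, star (b g) ⬝ᵥ C *ᵥ (b g') := by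
      conv_lhs => rw [hv]
      exact quad_sum C Finset.univ b
    have h2 : (2 : ℂ) * (star v ⬝ᵥ C *ᵥ v)
        ≤ 2 * (((Fintype.card β : ℕ) : ℂ) * ∑ g : β, star (b g) ⬝ᵥ C *ᵥ (b g)) := by
      rw [hQv]
      have expand : (2 : ℂ) * (∑ g : β, ∑ g' : β, star (b g) ⬝ᵥ C *ᵥ (b g'))
          = ∑ g : β, ∑ g' : β,
              (star (b g) ⬝ᵥ C *ᵥ (b g') + star (b g') ⬝ᵥ C *ᵥ (b g)) := by
        rw [two_mul]
        simp only [Finset.sum_add_distrib]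
        congr 1
        exact Finset.sum_comm
      rw [expand]
      have bound : ∑ g : β, ∑ g' : β,
            (star (b g) ⬝ᵥ C *ᵥ (b g') + star (b g') ⬝ᵥ C *ᵥ (b g))
          ≤ ∑ g : β, ∑ g' : β,
            (star (b g) ⬝ᵥ C *ᵥ (b g) + star (b g') ⬝ᵥ C *ᵥ (b g')) := by
        refine Finset.sum_le_sum fun g _ => Finset.sum_le_sum fun g' _ => ?_
        exact pair_bound C hC (b g) (b g')
      refine le_trans bound (le_of_eq ?_)
      simp only [Finset.sum_add_distrib, Finset.sum_const, Finset.card_univ, nsmul_eq_mul]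
      rw [← Finset.mul_sum]
      ring
    have hQS : star v ⬝ᵥ C *ᵥ v
        ≤ ((Fintype.card β : ℕ) : ℂ) * ∑ g : β, star (b g) ⬝ᵥ C *ᵥ (b g) := by
      rw [← sub_nonneg] at h2 ⊢
      have hhalf : (0 : ℂ) ≤ ((2⁻¹ : ℝ) : ℂ) :=
        Complex.zero_le_real.mpr (by norm_num)
      have h3 := mul_nonneg hhalf h2
      convert h3 using 1
      push_cast
      ring
    refine le_trans hQS ?_
    have hcard : (0 : ℂ) ≤ ((Fintype.card β : ℕ) : ℂ) := Nat.cast_nonneg _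
    refine mul_le_mul_of_nonneg_left ?_ hcard
    rw [quad_pt_kron]
    refine Finset.sum_le_sum fun g _ => ?_
    exact Finset.single_le_sum (f := fun h => star (emb (fun f => v (f, g)) h) ⬝ᵥ C *ᵥ
      (emb (fun f => v (f, g)) h)) (fun h _ => hC.dotProduct_mulVec_nonneg _) (Finset.mem_univ g)

lemma smul_posSemidef {ι : Type*} [Fintype ι] {N : Matrix ι ι ℂ} (hN : N.PosSemidef)
    {c : ℝ} (hc : 0 ≤ c) : ((c : ℂ) • N).PosSemidef := by
  have hstar : star ((c : ℝ) : ℂ) = ((c : ℝ) : ℂ) := by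
    rw [Complex.star_def, Complex.conj_ofReal]
  refine PosSemidef.of_dotProduct_mulVec_nonneg ?_ ?_
  · apply IsHermitian.ext
    intro i j
    simp only [Matrix.smul_apply, smul_eq_mul, star_mul', hstar]
    rw [hN.1.apply i j]
  · intro x
    rw [smul_mulVec, dotProduct_smul, smul_eq_mul]
    exact mul_nonneg (Complex.zero_le_real.mpr hc) (hN.dotProduct_mulVec_nonneg x)

end ChannelSimAux

open ChannelSimAux

/-- Every quantum channel with n-dimensional input and m-dimensional output can be
simulated from the future to the past with probability at least max(1/n², 1/m²). -/
theorem general_channel_sim_lower_bound (m n : ℕ) (hm : 1 ≤ m) (hn : 1 ≤ n)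
    (C : Matrix (Fin m × Fin n) (Fin m × Fin n) ℂ) (hC : C.PosSemidef)
    (hTr : ∀ g g' : Fin n, ∑ f : Fin m, C (f, g) (f, g') = if g = g' then 1 else 0) :
    ∃ ρ₀ : Matrix (Fin m) (Fin m) ℂ, ρ₀.PosSemidef ∧ ρ₀.trace = 1 ∧
      (ρ₀ ⊗ₖ (1 : Matrix (Fin n) (Fin n) ℂ) -
        ((max (1 / (n : ℝ) ^ 2) (1 / (m : ℝ) ^ 2) : ℝ) : ℂ) • C).PosSemidef := by
  have hm0 : (0 : ℝ) < m := by exact_mod_cast hm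
  have hn0 : (0 : ℝ) < n := by exact_mod_cast hn
  have hmC : ((m : ℕ) : ℂ) ≠ 0 := Nat.cast_ne_zero.mpr (by omega)
  have hnC : ((n : ℕ) : ℂ) ≠ 0 := Nat.cast_ne_zero.mpr (by omega)
  rcases le_total n m with hnm | hmn
  · -- n ≤ m : use 1/n², ρ₀ = (1/n) • pt C
    have hmax : max (1 / (n : ℝ) ^ 2) (1 / (m : ℝ) ^ 2) = 1 / (n : ℝ) ^ 2 := by
      apply max_eq_left
      gcongr
    refine ⟨(((n : ℝ)⁻¹ : ℝ) : ℂ) • pt C, smul_posSemidef (pt_posSemidef C hC)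
      (by positivity), ?_, ?_⟩
    · rw [trace_smul]
      have htrT : (pt C).trace = ((n : ℕ) : ℂ) := by
        rw [trace]
        simp only [pt, diag_apply, of_apply]
        rw [Finset.sum_comm]
        simp only [hTr]
        simp
      rw [htrT]
      simp only [smul_eq_mul]
      rw [Complex.ofReal_inv, Complex.ofReal_natCast, inv_mul_cancel₀ hnC]
    · have hkey := key C hC
      rw [Fintype.card_fin] at hkey
      have hsc : (((n : ℝ)⁻¹ : ℝ) : ℂ) = ((1 / (n : ℝ) ^ 2 : ℝ) : ℂ) * ((n : ℕ) : ℂ) := by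
        rw [← Complex.ofReal_natCast, ← Complex.ofReal_mul]
        congr 1
        field_simp
      have hrw : ((((n : ℝ)⁻¹ : ℝ) : ℂ) • pt C) ⊗ₖ (1 : Matrix (Fin n) (Fin n) ℂ) -
            ((max (1 / (n : ℝ) ^ 2) (1 / (m : ℝ) ^ 2) : ℝ) : ℂ) • C
          = ((1 / (n : ℝ) ^ 2 : ℝ) : ℂ) •
              (((n : ℕ) : ℂ) • ((pt C) ⊗ₖ (1 : Matrix (Fin n) (Fin n) ℂ)) - C) := by
        rw [hmax, smul_sub, smul_smul, ← hsc, smul_kronecker]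
      rw [hrw]
      exact smul_posSemidef hkey (by positivity)
  · -- m ≤ n : use 1/m², ρ₀ = (1/m) • 1
    have hmax : max (1 / (n : ℝ) ^ 2) (1 / (m : ℝ) ^ 2) = 1 / (m : ℝ) ^ 2 := by
      apply max_eq_right
      gcongr
    refine ⟨(((m : ℝ)⁻¹ : ℝ) : ℂ) • (1 : Matrix (Fin m) (Fin m) ℂ),
      smul_posSemidef Matrix.PosSemidef.one (by positivity), ?_, ?_⟩
    · rw [trace_smul, trace_one]
      simp only [smul_eq_mul]
      have : (Fintype.card (Fin m) : ℂ) = ((m : ℕ) : ℂ) := by rw [Fintype.card_fin]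
      rw [this, Complex.ofReal_inv, Complex.ofReal_natCast, inv_mul_cancel₀ hmC]
    · set e : (Fin n × Fin m) ≃ (Fin m × Fin n) := Equiv.prodComm _ _ with he
      set C' : Matrix (Fin n × Fin m) (Fin n × Fin m) ℂ := C.submatrix e e with hC'def
      have hC' : C'.PosSemidef := hC.submatrix e
      have hkey := key C' hC'
      rw [Fintype.card_fin] at hkey
      have hptC' : pt C' = (1 : Matrix (Fin n) (Fin n) ℂ) := by
        ext g g'
        simp only [pt, of_apply, hC'def, submatrix_apply, he, Equiv.prodComm_apply,
          Prod.swap_prod_mk]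
        rw [hTr g g', one_apply]
      rw [hptC', one_kronecker_one] at hkey
      have hkey2 := hkey.submatrix e.symm
      have hsub : ((((m : ℕ) : ℂ)) • (1 : Matrix (Fin n × Fin m) (Fin n × Fin m) ℂ)
              - C').submatrix e.symm e.symm
          = (((m : ℕ) : ℂ)) • (1 : Matrix (Fin m × Fin n) (Fin m × Fin n) ℂ) - C := by
        ext p q
        simp only [submatrix_apply, Matrix.sub_apply, Matrix.smul_apply, hC'def,
          Equiv.apply_symm_apply, one_apply, EmbeddingLike.apply_eq_iff_eq]
      rw [hsub] at hkey2
      have hsc : (((m : ℝ)⁻¹ : ℝ) : ℂ) = ((1 / (m : ℝ) ^ 2 : ℝ) : ℂ) * ((m : ℕ) : ℂ) := by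
        rw [← Complex.ofReal_natCast, ← Complex.ofReal_mul]
        congr 1
        field_simp
      have hrw : ((((m : ℝ)⁻¹ : ℝ) : ℂ) • (1 : Matrix (Fin m) (Fin m) ℂ)) ⊗ₖ
            (1 : Matrix (Fin n) (Fin n) ℂ) -
            ((max (1 / (n : ℝ) ^ 2) (1 / (m : ℝ) ^ 2) : ℝ) : ℂ) • C
          = ((1 / (m : ℝ) ^ 2 : ℝ) : ℂ) •
              (((m : ℕ) : ℂ) • (1 : Matrix (Fin m × Fin n) (Fin m × Fin n) ℂ) - C) := by
        rw [hmax, smul_sub, smul_smul, ← hsc, smul_kronecker, one_kronecker_one]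
      rw [hrw]
      exact smul_posSemidef hkey2 (by positivity)
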